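/- Let f : ℝ × ℝ^d → ℝ^d be continuous, let Ā : [0,1]×[0,1] → ℝ and B̄, B, C : [0,1] → ℝ be coefficient functions, let h ∈ ℝ, t₀ ∈ ℝ, and (q₀,q₀'), (q₁,q₁') ∈ ℝ^d × ℝ^d, and set t₁ = t₀ + h. Define the adjoint coefficients C*(τ) = 1 − C(1−τ), Ā*(τ,σ) = B(1−σ)(1 − C(1−τ)) − B̄(1−σ) + Ā(1−τ,1−σ), B̄*(τ) = B(1−τ) − B̄(1−τ), B*(τ) = B(1−τ). Then a continuous function Q : [0,1] → ℝ^d satisfies the csRKN equations with coefficients (Ā,B̄,B,C), step size −h, initial data (t₁,q₁,q₁') and outputs (q₀,q₀') if and only if the function Q*(τ) = Q(1−τ) satisfies the csRKN equations with the adjoint coefficients (Ā*,B̄*,B*,C*), step size h, initial data (t₀,q₀,q₀') and outputs (q₁,q₁'). -/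

import Mathlib

open Set MeasureTheory

noncomputable section

/-- A continuous-stage Runge–Kutta–Nyström (csRKN) method with coefficient functions
`Abar : [0,1]×[0,1] → ℝ` and `Bbar, B, C : [0,1] → ℝ`, applied to `q'' = f(t,q)` with
step size `h` and initial data `(t₀, q₀, q₀')`: the stage function `Q` and the
outputs `(q₁, q₁')` satisfy the csRKN equations. -/
def csRKN {d : ℕ} (f : ℝ → (Fin d → ℝ) → (Fin d → ℝ))
    (Abar : ℝ → ℝ → ℝ) (Bbar B C : ℝ → ℝ)
    (h t₀ : ℝ) (q₀ q₀' : Fin d → ℝ)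
    (Q : ℝ → Fin d → ℝ) (q₁ q₁' : Fin d → ℝ) : Prop :=
  (∀ τ ∈ Set.Icc (0:ℝ) 1,
      Q τ = q₀ + (h * C τ) • q₀' +
        h ^ 2 • ∫ σ in (0:ℝ)..1, Abar τ σ • f (t₀ + C σ * h) (Q σ)) ∧
  q₁ = q₀ + h • q₀' + h ^ 2 • ∫ τ in (0:ℝ)..1, Bbar τ • f (t₀ + C τ * h) (Q τ) ∧
  q₁' = q₀' + h • ∫ τ in (0:ℝ)..1, B τ • f (t₀ + C τ * h) (Q τ)

theorem csRKN_congr' {d : ℕ} (f : ℝ → (Fin d → ℝ) → (Fin d → ℝ))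
    (A₁ A₂ : ℝ → ℝ → ℝ) (Bb1 Bb2 B₁ B₂ C₁ C₂ : ℝ → ℝ)
    (h t₀ : ℝ) (q₀ q₀' : Fin d → ℝ) (Q₁ Q₂ : ℝ → Fin d → ℝ) (q₁ q₁' : Fin d → ℝ)
    (hA : ∀ τ σ, A₁ τ σ = A₂ τ σ) (hBb : ∀ τ, Bb1 τ = Bb2 τ)
    (hB : ∀ τ, B₁ τ = B₂ τ) (hC : ∀ τ, C₁ τ = C₂ τ) (hQ : ∀ τ, Q₁ τ = Q₂ τ)
    (H : csRKN f A₁ Bb1 B₁ C₁ h t₀ q₀ q₀' Q₁ q₁ q₁') :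
    csRKN f A₂ Bb2 B₂ C₂ h t₀ q₀ q₀' Q₂ q₁ q₁' := by
  obtain rfl : A₁ = A₂ := funext fun τ => funext fun σ => hA τ σ
  obtain rfl : Bb1 = Bb2 := funext hBb
  obtain rfl : B₁ = B₂ := funext hB
  obtain rfl : C₁ = C₂ := funext hC
  obtain rfl : Q₁ = Q₂ := funext hQ
  exact H

theorem csRKN_adjoint_mp {d : ℕ} (f : ℝ → (Fin d → ℝ) → (Fin d → ℝ))
    (hf : Continuous fun p : ℝ × (Fin d → ℝ) => f p.1 p.2)
    (Abar : ℝ → ℝ → ℝ) (Bbar B C : ℝ → ℝ)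
    (hAc : Continuous fun p : ℝ × ℝ => Abar p.1 p.2)
    (hBbarc : Continuous Bbar) (hBc : Continuous B) (hCc : Continuous C)
    (h t₀ t₁ : ℝ) (ht₁ : t₁ = t₀ + h)
    (q₀ q₀' q₁ q₁' : Fin d → ℝ)
    (Q : ℝ → Fin d → ℝ) (hQ : ContinuousOn Q (Set.Icc 0 1))
    (H : csRKN f Abar Bbar B C (-h) t₁ q₁ q₁' Q q₀ q₀') :
    csRKN f
      (fun τ σ => B (1 - σ) * (1 - C (1 - τ)) - Bbar (1 - σ) + Abar (1 - τ) (1 - σ))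
      (fun τ => B (1 - τ) - Bbar (1 - τ))
      (fun τ => B (1 - τ))
      (fun τ => 1 - C (1 - τ))
      h t₀ q₀ q₀' (fun τ => Q (1 - τ)) q₁ q₁' := by
  simp only [csRKN] at H ⊢
  obtain ⟨h1, h2, h3⟩ := H
  have hFc : ContinuousOn (fun σ => f (t₁ + C σ * (-h)) (Q σ)) (Set.Icc (0:ℝ) 1) :=
    hf.comp_continuousOn (f := fun σ => (t₁ + C σ * (-h), Q σ))
      (((continuous_const.add (hCc.mul continuous_const)).continuousOn).prodMk hQ)
  have hint : ∀ g : ℝ → ℝ, Continuous g →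
      IntervalIntegrable (fun σ => g σ • f (t₁ + C σ * (-h)) (Q σ))
        MeasureTheory.volume 0 1 := by
    intro g hg
    apply ContinuousOn.intervalIntegrable
    rw [Set.uIcc_of_le (zero_le_one (α := ℝ))]
    exact (hg.continuousOn).smul hFc
  have hcv : ∀ G : ℝ → (Fin d → ℝ),
      (∫ σ in (0:ℝ)..1, G (1 - σ)) = ∫ σ in (0:ℝ)..1, G σ := by
    intro G
    have := intervalIntegral.integral_comp_sub_left (a := (0:ℝ)) (b := 1) G 1
    simpa using this
  have harg : ∀ s : ℝ, t₀ + (1 - C s) * h = t₁ + C s * (-h) := fun s => by rw [ht₁]; ring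
  have hIB := hint B hBc
  have hIBbar := hint Bbar hBbarc
  refine ⟨?_, ?_, ?_⟩
  · intro τ hτ
    have hτ' : 1 - τ ∈ Set.Icc (0:ℝ) 1 := ⟨by linarith [hτ.2], by linarith [hτ.1]⟩
    simp only [harg]
    have e0 : (∫ σ in (0:ℝ)..1,
        (B (1 - σ) * (1 - C (1 - τ)) - Bbar (1 - σ) + Abar (1 - τ) (1 - σ)) •
          f (t₁ + C (1 - σ) * (-h)) (Q (1 - σ)))
        = ∫ σ in (0:ℝ)..1,
          (B σ * (1 - C (1 - τ)) - Bbar σ + Abar (1 - τ) σ) •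
            f (t₁ + C σ * (-h)) (Q σ) :=
      hcv (fun σ => (B σ * (1 - C (1 - τ)) - Bbar σ + Abar (1 - τ) σ) •
            f (t₁ + C σ * (-h)) (Q σ))
    rw [e0]
    have split : ∀ σ : ℝ,
        (B σ * (1 - C (1 - τ)) - Bbar σ + Abar (1 - τ) σ) • f (t₁ + C σ * (-h)) (Q σ)
        = (1 - C (1 - τ)) • (B σ • f (t₁ + C σ * (-h)) (Q σ))
            - Bbar σ • f (t₁ + C σ * (-h)) (Q σ)
            + Abar (1 - τ) σ • f (t₁ + C σ * (-h)) (Q σ) := by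
      intro σ; module
    simp only [split]
    have hIA : IntervalIntegrable
        (fun σ => Abar (1 - τ) σ • f (t₁ + C σ * (-h)) (Q σ)) MeasureTheory.volume 0 1 :=
      hint (fun σ => Abar (1 - τ) σ)
        (hAc.comp (continuous_const.prodMk continuous_id))
    have hcB : IntervalIntegrable
        (fun σ => (1 - C (1 - τ)) • (B σ • f (t₁ + C σ * (-h)) (Q σ)))
        MeasureTheory.volume 0 1 := by
      simpa [smul_smul] using
        hint (fun σ => (1 - C (1 - τ)) * B σ) (continuous_const.mul hBc)
    rw [intervalIntegral.integral_add (hcB.sub hIBbar) hIA,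
      intervalIntegral.integral_sub hcB hIBbar,
      intervalIntegral.integral_smul]
    rw [h1 (1 - τ) hτ', h2, h3]
    module
  · simp only [harg]
    have e0 : (∫ σ in (0:ℝ)..1,
        (B (1 - σ) - Bbar (1 - σ)) • f (t₁ + C (1 - σ) * (-h)) (Q (1 - σ)))
        = ∫ σ in (0:ℝ)..1, (B σ - Bbar σ) • f (t₁ + C σ * (-h)) (Q σ) :=
      hcv (fun σ => (B σ - Bbar σ) • f (t₁ + C σ * (-h)) (Q σ))
    rw [e0]
    simp only [sub_smul]
    rw [intervalIntegral.integral_sub hIB hIBbar, h2, h3]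
    module
  · simp only [harg]
    have e0 : (∫ σ in (0:ℝ)..1,
        B (1 - σ) • f (t₁ + C (1 - σ) * (-h)) (Q (1 - σ)))
        = ∫ σ in (0:ℝ)..1, B σ • f (t₁ + C σ * (-h)) (Q σ) :=
      hcv (fun σ => B σ • f (t₁ + C σ * (-h)) (Q σ))
    rw [e0, h3]
    module

/-- a continuous `Q` satisfies the csRKN equations with coefficients
`(Ā, B̄, B, C)`, step size `-h`, initial data `(t₁, q₁, q₁')` and outputs `(q₀, q₀')`
iff `Q*(τ) = Q(1-τ)` satisfies the csRKN equations with the adjoint coefficients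
`(Ā*, B̄*, B*, C*)`, step size `h`, initial data `(t₀, q₀, q₀')` and outputs `(q₁, q₁')`. -/
theorem csRKN_adjoint_iff {d : ℕ} (f : ℝ → (Fin d → ℝ) → (Fin d → ℝ))
    (hf : Continuous fun p : ℝ × (Fin d → ℝ) => f p.1 p.2)
    (Abar : ℝ → ℝ → ℝ) (Bbar B C : ℝ → ℝ)
    (hAc : Continuous fun p : ℝ × ℝ => Abar p.1 p.2)
    (hBbarc : Continuous Bbar) (hBc : Continuous B) (hCc : Continuous C)
    (h t₀ t₁ : ℝ) (ht₁ : t₁ = t₀ + h)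
    (q₀ q₀' q₁ q₁' : Fin d → ℝ)
    (Q : ℝ → Fin d → ℝ) (hQ : ContinuousOn Q (Set.Icc 0 1)) :
    csRKN f Abar Bbar B C (-h) t₁ q₁ q₁' Q q₀ q₀' ↔
      csRKN f
        (fun τ σ => B (1 - σ) * (1 - C (1 - τ)) - Bbar (1 - σ) + Abar (1 - τ) (1 - σ))
        (fun τ => B (1 - τ) - Bbar (1 - τ))
        (fun τ => B (1 - τ))
        (fun τ => 1 - C (1 - τ))
        h t₀ q₀ q₀' (fun τ => Q (1 - τ)) q₁ q₁' := by
  constructor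
  · exact csRKN_adjoint_mp f hf Abar Bbar B C hAc hBbarc hBc hCc h t₀ t₁ ht₁ q₀ q₀' q₁ q₁' Q hQ
  · intro H
    have hQ' : ContinuousOn (fun τ => Q (1 - τ)) (Set.Icc (0:ℝ) 1) :=
      hQ.comp ((continuous_const.sub continuous_id).continuousOn)
        (fun x hx => ⟨by linarith [hx.2], by linarith [hx.1]⟩)
    have hsub2 : Continuous fun p : ℝ × ℝ => (1 - p.1, 1 - p.2) :=
      (continuous_const.sub continuous_fst).prodMk (continuous_const.sub continuous_snd)
    have hA'c : Continuous fun p : ℝ × ℝ =>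
        B (1 - p.2) * (1 - C (1 - p.1)) - Bbar (1 - p.2) + Abar (1 - p.1) (1 - p.2) :=
      (((hBc.comp (continuous_const.sub continuous_snd)).mul
        (continuous_const.sub (hCc.comp (continuous_const.sub continuous_fst)))).sub
        (hBbarc.comp (continuous_const.sub continuous_snd))).add (hAc.comp hsub2)
    have H' : csRKN f
        (fun τ σ => B (1 - σ) * (1 - C (1 - τ)) - Bbar (1 - σ) + Abar (1 - τ) (1 - σ))
        (fun τ => B (1 - τ) - Bbar (1 - τ))
        (fun τ => B (1 - τ))
        (fun τ => 1 - C (1 - τ))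
        (-(-h)) t₀ q₀ q₀' (fun τ => Q (1 - τ)) q₁ q₁' := by rw [neg_neg]; exact H
    have H2 := csRKN_adjoint_mp f hf
      (fun τ σ => B (1 - σ) * (1 - C (1 - τ)) - Bbar (1 - σ) + Abar (1 - τ) (1 - σ))
      (fun τ => B (1 - τ) - Bbar (1 - τ))
      (fun τ => B (1 - τ))
      (fun τ => 1 - C (1 - τ))
      hA'c
      ((hBc.comp (continuous_const.sub continuous_id)).sub
        (hBbarc.comp (continuous_const.sub continuous_id)))
      (hBc.comp (continuous_const.sub continuous_id))
      (continuous_const.sub (hCc.comp (continuous_const.sub continuous_id)))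
      (-h) t₁ t₀ (by rw [ht₁]; ring) q₁ q₁' q₀ q₀' (fun τ => Q (1 - τ)) hQ' H'
    refine csRKN_congr' f _ Abar _ Bbar _ B _ C (-h) t₁ q₁ q₁' _ Q q₀ q₀'
      ?_ ?_ ?_ ?_ ?_ H2
    · intro τ σ; simp only [sub_sub_cancel]; ring
    · intro τ; simp only [sub_sub_cancel]
    · intro τ; simp only [sub_sub_cancel]
    · intro τ; simp only [sub_sub_cancel]
    · intro τ; simp only [sub_sub_cancel]

end
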